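/- Let p be an odd integer with p ≥ 3 and let k ≥ 0. Set q = (2k+1)p - 1 and d = (p-1)(q-1)/2 = (p-1)((2k+1)p-2)/2. Then for every integer i with 0 ≤ i ≤ (p-3)/2, the integer d + i is NOT in the numerical semigroup generated by p and q, i.e., there do not exist nonnegative integers a, b with ap + bq = d + i. Moreover, d + (p-1)/2 IS in the semigroup: ((p-1)/2)·q = d + (p-1)/2. -/
import Mathlib


/-- For odd `p ≥ 3`, `k ≥ 0`, `q = (2k+1)p - 1` and `2d = (p-1)(q-1)`:
for every `0 ≤ i ≤ (p-3)/2`, the integer `d + i` is not in the numerical semigroup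
generated by `p` and `q`, while `((p-1)/2)·q = d + (p-1)/2`. -/
theorem stmt5 (p k q d : ℤ) (hp : 3 ≤ p) (hpodd : Odd p) (hk : 0 ≤ k)
    (hq : q = (2 * k + 1) * p - 1) (hd : 2 * d = (p - 1) * (q - 1)) :
    (∀ i : ℤ, 0 ≤ i → i ≤ (p - 3) / 2 →
      ¬ ∃ a b : ℤ, 0 ≤ a ∧ 0 ≤ b ∧ a * p + b * q = d + i) ∧
    ((p - 1) / 2) * q = d + (p - 1) / 2 := by
  obtain ⟨t, ht⟩ := hpodd
  have ht1 : 1 ≤ t := by omega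
  have hq0 : 0 < q := by nlinarith
  have hdt : d = t * (q - 1) := by nlinarith
  constructor
  · rintro i hi0 hi1 ⟨a, b, ha, hb, hab⟩
    have hi2 : i ≤ t - 1 := by omega
    have hdvd : p ∣ (b + i + 1) := by
      refine ⟨a + b * (2 * k + 1) - t * (2 * k + 1) + 1, ?_⟩
      linear_combination -hab + (b - t) * hq - ht - hdt
    have hge : p ≤ b + i + 1 := Int.le_of_dvd (by omega) hdvd
    have hbt : t + 1 ≤ b := by omega
    nlinarith [mul_le_mul_of_nonneg_right hbt (le_of_lt hq0), mul_nonneg ha (by linarith : (0:ℤ) ≤ p)]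
  · have h2 : (p - 1) / 2 = t := by omega
    rw [h2]
    linarith [hdt]
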